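/- Let 0 < q ≤ p, let X be a Banach space, let τ : D → D be injective, let L ⊆ D be finite, and let f = Σ_{J∈L} x_J h_J with x_J ∈ X. Then for every t ∈ [0,1], 𝕊((T_{τ,q} ⊗ Id_X) f)(t) ≤ μ_{τ(L)}(t)^{1/q − 1/p} · 𝕊((T_{τ,p} ⊗ Id_X) f)(t), where τ(L) = {τ(J) : J ∈ L}. -/

import Mathlib

open MeasureTheory Set
open scoped ENNReal NNReal Classical

noncomputable section

/-- A dyadic subinterval of `[0,1)`: the half-open interval
`[k/2^n, (k+1)/2^n)` with `k < 2^n`. -/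
structure DyadicI where
  n : ℕ
  k : ℕ
  hk : k < 2 ^ n

instance : Nonempty DyadicI := ⟨⟨0, 0, by norm_num⟩⟩

namespace DyadicI

/-- The length `|I| = 2^{-n}` of a dyadic interval. -/
def len (I : DyadicI) : ℝ := (2 : ℝ) ^ (-(I.n : ℤ))

/-- The left endpoint `k 2^{-n}` of a dyadic interval. -/
def lep (I : DyadicI) : ℝ := (I.k : ℝ) * I.len

/-- The underlying point set `[k/2^n, (k+1)/2^n)` of a dyadic interval. -/
def toSet (I : DyadicI) : Set ℝ := Set.Ico I.lep (I.lep + I.len)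

/-- The `L^∞`-normalized Haar function `h_I`: `1` on the left half of `I`,
`-1` on the right half of `I`, `0` off `I`. -/
def haar (I : DyadicI) (t : ℝ) : ℝ :=
  if t ∈ Set.Ico I.lep (I.lep + I.len / 2) then 1
  else if t ∈ Set.Ico (I.lep + I.len / 2) (I.lep + I.len) then -1
  else 0

end DyadicI

open DyadicI

section Defs

variable {X : Type*} [NormedAddCommGroup X] [NormedSpace ℝ X]

/-- The square function `𝕊(f)` of the `X`-valued Haar expansion `f = ∑_{I ∈ s} x_I h_I`:
`𝕊(f)(t) = (E_ε ‖∑_I ε_I x_I h_I(t)‖²)^{1/2}`, the average being taken over all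
choices of signs `ε_I ∈ {±1}`, `I ∈ s`. -/
def sqFn (s : Finset DyadicI) (x : DyadicI → X) (t : ℝ) : ℝ :=
  Real.sqrt ((∑ ε : {I // I ∈ s} → Bool,
    ‖∑ I ∈ s.attach, ((if ε I then (1 : ℝ) else -1) * haar I.1 t) • x I.1‖ ^ 2) /
      2 ^ s.card)

/-- The `H^p_X` (quasi-)norm of `f = ∑_{I ∈ s} x_I h_I`:
`‖f‖ = (∫₀¹ 𝕊(f)(t)^p dt)^{1/p}`. -/
def HpNormV (p : ℝ) (s : Finset DyadicI) (x : DyadicI → X) : ℝ :=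
  (∫ t in Set.Icc (0 : ℝ) 1, sqFn s x t ^ p) ^ (1 / p)

/-- The coefficients of `(T_{τ,p} ⊗ Id_X)(f)` for `f = ∑_{I ∈ s} x_I h_I`, namely
`(T_{τ,p} ⊗ Id_X)(f) = ∑_{I ∈ s} (|I|/|τ(I)|)^{1/p} x_I h_{τ(I)}`, as a family of
coefficients indexed by the Haar support `τ(s)`. -/
def rearrCoef (τ : DyadicI → DyadicI) (p : ℝ) (s : Finset DyadicI) (x : DyadicI → X) :
    DyadicI → X :=
  fun J => ∑ I ∈ s, if τ I = J then ((len I / len (τ I)) ^ (1 / p)) • x I else 0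

/-- The scalar dyadic square function `S(f) = (∑_I a_I² 1_I)^{1/2}`
of `f = ∑_{I ∈ s} a_I h_I`. -/
def sqFnS (s : Finset DyadicI) (a : DyadicI → ℝ) (t : ℝ) : ℝ :=
  Real.sqrt (∑ I ∈ s, a I ^ 2 * Set.indicator (toSet I) (fun _ => (1 : ℝ)) t)

/-- The scalar dyadic `H^p` (quasi-)norm `‖f‖_{H^p} = ‖S(f)‖_{L^p[0,1]}`. -/
def HpNormS (p : ℝ) (s : Finset DyadicI) (a : DyadicI → ℝ) : ℝ :=
  (∫ t in Set.Icc (0 : ℝ) 1, sqFnS s a t ^ p) ^ (1 / p)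

/-- The coefficients of the scalar rearrangement operator `T_{τ,p}` applied to
`f = ∑_{I ∈ s} a_I h_I`; `T_{τ,p}` is determined by
`T_{τ,p}(h_I/|I|^{1/p}) = h_{τ(I)}/|τ(I)|^{1/p}`. -/
def rearrCoefS (τ : DyadicI → DyadicI) (p : ℝ) (s : Finset DyadicI) (a : DyadicI → ℝ) :
    DyadicI → ℝ :=
  fun J => ∑ I ∈ s, if τ I = J then ((len I / len (τ I)) ^ (1 / p)) * a I else 0

/-- The operator norm `‖T_{τ,p} ⊗ Id_X : H^p_X → H^p_X‖ ∈ [0,∞]`, computed as the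
supremum over finitely supported `f` in the unit ball of `H^p_X`. -/
def hpOpNorm (τ : DyadicI → DyadicI) (p : ℝ) (X : Type*) [NormedAddCommGroup X]
    [NormedSpace ℝ X] : ℝ≥0∞ :=
  ⨆ (s : Finset DyadicI) (x : DyadicI → X) (_ : HpNormV p s x ≤ 1),
    ENNReal.ofReal (HpNormV p (s.image τ) (rearrCoef τ p s x))

/-- The scalar operator norm `‖T_{τ,p} : H^p → H^p‖ ∈ [0,∞]`. -/
def hpOpNormS (τ : DyadicI → DyadicI) (p : ℝ) : ℝ≥0∞ :=
  ⨆ (s : Finset DyadicI) (a : DyadicI → ℝ) (_ : HpNormS p s a ≤ 1),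
    ENNReal.ofReal (HpNormS p (s.image τ) (rearrCoefS τ p s a))

/-- For `H = τ(L)` (so that `σ(J) = I` for `J = τ(I)`, `I ∈ L`), the maximal function
`μ_H(t) = sup_{J ∈ H} (|σ(J)|/|J|) 1_J(t) = sup_{I ∈ L} (|I|/|τ(I)|) 1_{τ(I)}(t)`,
as an `[0,∞]`-valued function. -/
def muSet (τ : DyadicI → DyadicI) (L : Set DyadicI) (t : ℝ) : ℝ≥0∞ :=
  ⨆ (I : DyadicI) (_ : I ∈ L),
    ENNReal.ofReal (len I / len (τ I) * Set.indicator (toSet (τ I)) (fun _ => (1 : ℝ)) t)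

/-- For `H = τ(L)` with `L` finite, the (real-valued) maximal function
`μ_H(t) = max_{I ∈ L} (|I|/|τ(I)|) 1_{τ(I)}(t)`. -/
def muFin (τ : DyadicI → DyadicI) (L : Finset DyadicI) (t : ℝ) : ℝ :=
  ((L.sup fun I =>
    Real.toNNReal (len I / len (τ I) * Set.indicator (toSet (τ I)) (fun _ => (1 : ℝ)) t) : ℝ≥0) : ℝ)

/-- The point set `L* = ⋃_{I ∈ L} I` covered by a collection of dyadic intervals. -/
def pointSet (L : Set DyadicI) : Set ℝ := ⋃ I ∈ L, toSet I

/-- The constant `C₁ = sup_{H ⊆ τ(D), H ≠ ∅} (1/|σ(H)*|) ∫₀¹ μ_H(t) dt`, where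
nonempty collections `H ⊆ τ(D)` are parametrized as `H = τ(L)` for nonempty `L ⊆ D`,
so that `σ(H)* = L*`. -/
def Cone (τ : DyadicI → DyadicI) : ℝ≥0∞ :=
  ⨆ (L : Set DyadicI) (_ : L.Nonempty),
    (∫⁻ t in Set.Icc (0 : ℝ) 1, muSet τ L t) / volume (pointSet L)

/-- The square of the dyadic BMO norm of `g = ∑_{J ∈ s} a_J h_J`:
`‖g‖_{BMO}² = sup_{I ∈ D} (1/|I|) ∑_{J ⊆ I} a_J² |J|`. -/
def bmoSq (s : Finset DyadicI) (a : DyadicI → ℝ) : ℝ≥0∞ :=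
  ⨆ I : DyadicI, ENNReal.ofReal
    ((∑ J ∈ s.filter fun J => toSet J ⊆ toSet I, a J ^ 2 * len J) / len I)

/-- The coefficients of `S_σ(g)` for `g = ∑_{J ∈ s} a_J h_J`, where `σ = τ⁻¹` on `τ(D)`:
`S_σ(h_J) = h_{σ(J)}` for `J ∈ τ(D)` and `S_σ(h_J) = 0` otherwise, so that the
coefficient of `h_K` in `S_σ(g)` is `a_{τ(K)}` if `τ(K) ∈ s`, and `0` otherwise. -/
def sSigmaCoef (τ : DyadicI → DyadicI) (s : Finset DyadicI) (a : DyadicI → ℝ) :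
    DyadicI → ℝ :=
  fun K => if τ K ∈ s then a (τ K) else 0

/-- The Haar support of `S_σ(g)` for `g` with Haar support `s`:
`σ(s ∩ τ(D))`, i.e. the preimage under `τ` of `s`. -/
def sSigmaSupp (τ : DyadicI → DyadicI) (s : Finset DyadicI) : Finset DyadicI :=
  (s.filter fun J => J ∈ Set.range τ).image (Function.invFun τ)

/-- The operator norm `‖S_σ‖_{BMO} ∈ [0,∞]` of `S_σ` with respect to the dyadic BMO
norm, computed over finitely supported Haar expansions. -/
def bmoOpNorm (τ : DyadicI → DyadicI) : ℝ≥0∞ :=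
  ⨆ (s : Finset DyadicI) (a : DyadicI → ℝ) (_ : bmoSq s a ≤ 1),
    (bmoSq (sSigmaSupp τ s) (sSigmaCoef τ s a)) ^ (1 / 2 : ℝ)

/-- The Carleson constant `⟦C⟧ = sup_{I ∈ C} (1/|I|) ∑_{J ∈ C, J ⊆ I} |J| ∈ [0,∞]`
of a collection of dyadic intervals. -/
def carleson (C : Set DyadicI) : ℝ≥0∞ :=
  ⨆ (I : DyadicI) (_ : I ∈ C),
    (∑' J : {J : DyadicI // J ∈ C ∧ toSet J ⊆ toSet I}, ENNReal.ofReal (len J.1)) /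
      ENNReal.ofReal (len I)

/-- The `L^p_X = L^p([0,1]; X)` (Bochner) norm of `f = ∑_{I ∈ s} x_I h_I`. -/
def LpNormV (p : ℝ) (s : Finset DyadicI) (x : DyadicI → X) : ℝ :=
  (∫ t in Set.Icc (0 : ℝ) 1, ‖∑ I ∈ s, haar I t • x I‖ ^ p) ^ (1 / p)

/-- The operator norm `‖T_{τ,p} ⊗ Id_X : L^p_X → L^p_X‖ ∈ [0,∞]`, computed over
finitely supported Haar expansions. -/
def lpOpNorm (τ : DyadicI → DyadicI) (p : ℝ) (X : Type*) [NormedAddCommGroup X]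
    [NormedSpace ℝ X] : ℝ≥0∞ :=
  ⨆ (s : Finset DyadicI) (x : DyadicI → X) (_ : LpNormV p s x ≤ 1),
    ENNReal.ofReal (LpNormV p (s.image τ) (rearrCoef τ p s x))

/-- The operator norm `‖T_{τ,p}^{-1} ⊗ Id_X‖ ∈ [0,∞]` on the span of
`{h_J : J ∈ τ(D)}` with the `L^p_X` norm: the map determined by
`x h_{τ(I)}/|τ(I)|^{1/p} ↦ x h_I/|I|^{1/p}`, i.e. sending
`g = ∑_{I ∈ L} x_I h_{τ(I)}` to `∑_{I ∈ L} (|τ(I)|/|I|)^{1/p} x_I h_I`. -/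
def lpInvOpNorm (τ : DyadicI → DyadicI) (p : ℝ) (X : Type*) [NormedAddCommGroup X]
    [NormedSpace ℝ X] : ℝ≥0∞ :=
  ⨆ (L : Finset DyadicI) (x : DyadicI → X)
    (_ : LpNormV p (L.image τ) (fun J => ∑ I ∈ L, if τ I = J then x I else 0) ≤ 1),
    ENNReal.ofReal (LpNormV p L fun I => ((len (τ I) / len I) ^ (1 / p)) • x I)

/-- The operator norm `‖T_{τ,1}^{-1}‖₁ ∈ [0,∞]` on the span of `{h_J : J ∈ τ(D)}`
with the dyadic `H¹` norm: the map determined by `h_{τ(I)}/|τ(I)| ↦ h_I/|I|`,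
i.e. sending `g = ∑_{I ∈ L} a_I h_{τ(I)}` to `∑_{I ∈ L} (|τ(I)|/|I|) a_I h_I`. -/
def h1InvOpNorm (τ : DyadicI → DyadicI) : ℝ≥0∞ :=
  ⨆ (L : Finset DyadicI) (a : DyadicI → ℝ)
    (_ : HpNormS 1 (L.image τ) (fun J => ∑ I ∈ L, if τ I = J then a I else 0) ≤ 1),
    ENNReal.ofReal (HpNormS 1 L fun I => (len (τ I) / len I) * a I)

/-- The Rademacher average `(E_ε ‖∑_{i<n} ε_i a_i‖^p)^{1/p}` over all choices of
signs `ε_i ∈ {±1}`. -/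
def radAvg (p : ℝ) {Y : Type*} [NormedAddCommGroup Y] [NormedSpace ℝ Y] (n : ℕ)
    (a : Fin n → Y) : ℝ :=
  ((∑ ε : Fin n → Bool, ‖∑ i, (if ε i then (1 : ℝ) else -1) • a i‖ ^ p) / 2 ^ n) ^ (1 / p)

/-- The type-`p` constant `Type_p(Y) ∈ [0,∞]`: the least `C` such that
`(E_ε ‖∑ ε_i a_i‖^p)^{1/p} ≤ C (∑ ‖a_i‖^p)^{1/p}` for all finite families in `Y`. -/
def typeConst (p : ℝ) (Y : Type*) [NormedAddCommGroup Y] [NormedSpace ℝ Y] : ℝ≥0∞ :=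
  sInf {C : ℝ≥0∞ | ∀ (n : ℕ) (a : Fin n → Y),
    ENNReal.ofReal (radAvg p n a) ≤ C * ENNReal.ofReal ((∑ i, ‖a i‖ ^ p) ^ (1 / p))}

/-- The UMD property of a Banach space `E`: for each `1 < r < ∞` the Haar system is
unconditional in `L^r_E`. -/
def IsUMD (E : Type*) [NormedAddCommGroup E] [NormedSpace ℝ E] : Prop :=
  ∀ r : ℝ, 1 < r → ∃ β : ℝ, ∀ (s : Finset DyadicI) (x : DyadicI → E) (ε : DyadicI → ℝ),
    (∀ I, ε I = 1 ∨ ε I = -1) →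
    LpNormV r s (fun I => ε I • x I) ≤ β * LpNormV r s x

/-- `B` is a block in `L` with top `I`: `B ⊆ L`, `I` is the unique maximal interval
of `B`, and `B` is order-convex in `L` between its elements and `I`. -/
def IsBlock (L : Set DyadicI) (B : Set DyadicI) (I : DyadicI) : Prop :=
  B ⊆ L ∧ I ∈ B ∧ (∀ J ∈ B, toSet J ⊆ toSet I) ∧
    ∀ J ∈ B, ∀ K ∈ L, toSet J ⊆ toSet K → toSet K ⊆ toSet I → K ∈ B

/-- `G₁(K | E)`: the maximal dyadic intervals of `E` strictly contained in `K`. -/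
def gen1 (K : DyadicI) (E : Set DyadicI) : Set DyadicI :=
  {J | J ∈ E ∧ toSet J ⊂ toSet K ∧
    ∀ J' ∈ E, toSet J' ⊂ toSet K → toSet J ⊆ toSet J' → J' = J}

end Defs

section ContractionAux

variable {X : Type*} [NormedAddCommGroup X] [NormedSpace ℝ X]

private def sgn (b : Bool) : ℝ := if b then 1 else -1

private lemma abs_sgn (b : Bool) : |sgn b| = 1 := by cases b <;> simp [sgn]

private def wfn {ι : Type*} [Fintype ι] (a : ι → ℝ) (s : ι → Bool) : ℝ :=
  ∏ i, (1 + sgn (s i) * a i) / 2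

variable {ι : Type*} [Fintype ι] [DecidableEq ι]

private lemma wfn_nonneg (a : ι → ℝ) (ha : ∀ i, |a i| ≤ 1) (s : ι → Bool) :
    0 ≤ wfn a s := by
  refine Finset.prod_nonneg fun i _ => ?_
  have h1 : |sgn (s i) * a i| ≤ 1 := by
    rw [abs_mul, abs_sgn, one_mul]; exact ha i
  have := neg_le_of_abs_le h1
  linarith

private lemma sum_wfn (a : ι → ℝ) : ∑ s : ι → Bool, wfn a s = 1 := by
  have h := Finset.prod_univ_sum (fun _ : ι => (Finset.univ : Finset Bool))
    (fun i b => (1 + sgn b * a i) / 2)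
  rw [Fintype.piFinset_univ] at h
  unfold wfn
  rw [← h]
  refine Finset.prod_eq_one fun i _ => ?_
  rw [Fintype.sum_bool]
  simp [sgn]; ring

private lemma sum_wfn_sgn (a : ι → ℝ) (i0 : ι) :
    ∑ s : ι → Bool, wfn a s * sgn (s i0) = a i0 := by
  have step1 : ∀ s : ι → Bool, wfn a s * sgn (s i0) =
      ∏ i, ((1 + sgn (s i) * a i) / 2 * (if i = i0 then sgn (s i) else 1)) := by
    intro s
    rw [Finset.prod_mul_distrib, Finset.prod_ite_eq' Finset.univ i0 (fun i => sgn (s i)),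
      if_pos (Finset.mem_univ i0)]
    rfl
  have step2 := Finset.prod_univ_sum (fun _ : ι => (Finset.univ : Finset Bool))
    (fun i b => (1 + sgn b * a i) / 2 * (if i = i0 then sgn b else 1))
  rw [Fintype.piFinset_univ] at step2
  calc ∑ s : ι → Bool, wfn a s * sgn (s i0)
      = ∑ s : ι → Bool, ∏ i, ((1 + sgn (s i) * a i) / 2 * (if i = i0 then sgn (s i) else 1)) :=
        Finset.sum_congr rfl fun s _ => step1 s
    _ = ∏ i, ∑ b : Bool, (1 + sgn b * a i) / 2 * (if i = i0 then sgn b else 1) := step2.symm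
    _ = a i0 := by
        rw [Finset.prod_eq_single i0 ?h1 ?h2]
        · rw [Fintype.sum_bool]
          simp only [if_pos rfl, sgn]
          norm_num
          ring
        case h1 =>
          intro i _ hne
          rw [Fintype.sum_bool, if_neg hne, if_neg hne]
          simp [sgn]; ring
        case h2 => intro h; exact absurd (Finset.mem_univ i0) h

private lemma jensen_sq (w : ι → ℝ) (v : ι → X)
    (hw : ∀ i, 0 ≤ w i) (hw1 : ∑ i, w i = 1) :
    ‖∑ i, w i • v i‖ ^ 2 ≤ ∑ i, w i * ‖v i‖ ^ 2 := by
  have h1 : ‖∑ i, w i • v i‖ ≤ ∑ i, w i * ‖v i‖ := by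
    refine (norm_sum_le _ _).trans (le_of_eq (Finset.sum_congr rfl fun i _ => ?_))
    rw [norm_smul, Real.norm_eq_abs, abs_of_nonneg (hw i)]
  have h2 : (∑ i, w i * ‖v i‖) ^ 2 ≤ ∑ i, w i * ‖v i‖ ^ 2 := by
    have hcs := Finset.sum_mul_sq_le_sq_mul_sq Finset.univ
      (fun i => Real.sqrt (w i)) (fun i => Real.sqrt (w i) * ‖v i‖)
    have e1 : ∑ i, Real.sqrt (w i) * (Real.sqrt (w i) * ‖v i‖) = ∑ i, w i * ‖v i‖ :=
      Finset.sum_congr rfl fun i _ => by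
        rw [← mul_assoc, Real.mul_self_sqrt (hw i)]
    have e2 : ∑ i, Real.sqrt (w i) ^ 2 = (1 : ℝ) := by
      rw [← hw1]; exact Finset.sum_congr rfl fun i _ => Real.sq_sqrt (hw i)
    have e3 : ∑ i, (Real.sqrt (w i) * ‖v i‖) ^ 2 = ∑ i, w i * ‖v i‖ ^ 2 :=
      Finset.sum_congr rfl fun i _ => by rw [mul_pow, Real.sq_sqrt (hw i)]
    rw [e1, e2, e3, one_mul] at hcs
    exact hcs
  calc ‖∑ i, w i • v i‖ ^ 2 ≤ (∑ i, w i * ‖v i‖) ^ 2 :=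
        pow_le_pow_left₀ (norm_nonneg _) h1 2
    _ ≤ _ := h2

private lemma contraction_unit (x : ι → X) (a : ι → ℝ) (ha : ∀ i, |a i| ≤ 1) :
    ∑ ε : ι → Bool, ‖∑ i, ((if ε i then (1 : ℝ) else -1) * a i) • x i‖ ^ 2 ≤
      ∑ ε : ι → Bool, ‖∑ i, (if ε i then (1 : ℝ) else -1) • x i‖ ^ 2 := by
  simp only [show ∀ b : Bool, (if b then (1 : ℝ) else -1) = sgn b from fun _ => rfl]
  have hkey : ∀ ε : ι → Bool, ∑ i, (sgn (ε i) * a i) • x i =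
      ∑ s : ι → Bool, wfn a s • ∑ i, (sgn (s i) * sgn (ε i)) • x i := by
    intro ε
    have h1 : ∑ s : ι → Bool, wfn a s • ∑ i, (sgn (s i) * sgn (ε i)) • x i
        = ∑ s : ι → Bool, ∑ i, (wfn a s * (sgn (s i) * sgn (ε i))) • x i := by
      refine Finset.sum_congr rfl fun s _ => ?_
      rw [Finset.smul_sum]
      exact Finset.sum_congr rfl fun i _ => by rw [smul_smul]
    rw [h1, Finset.sum_comm]
    refine Finset.sum_congr rfl fun i _ => ?_
    rw [← Finset.sum_smul]
    congr 1
    refine Eq.symm ?_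
    calc ∑ s : ι → Bool, wfn a s * (sgn (s i) * sgn (ε i))
        = (∑ s : ι → Bool, wfn a s * sgn (s i)) * sgn (ε i) := by
          rw [Finset.sum_mul]; exact Finset.sum_congr rfl fun s _ => by ring
      _ = a i * sgn (ε i) := by rw [sum_wfn_sgn a i]
      _ = sgn (ε i) * a i := mul_comm _ _
  have hbij : ∀ s : ι → Bool,
      ∑ ε : ι → Bool, ‖∑ i, (sgn (s i) * sgn (ε i)) • x i‖ ^ 2 =
      ∑ ε : ι → Bool, ‖∑ i, sgn (ε i) • x i‖ ^ 2 := by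
    intro s
    have hinv : Function.Involutive (fun (ε : ι → Bool) => fun i => (s i == ε i)) := by
      intro ε; funext i; cases h : s i <;> cases h2 : ε i <;> simp [h, h2]
    have hpt : ∀ (ε : ι → Bool) (i : ι), sgn (s i) * sgn (ε i) = sgn (s i == ε i) := by
      intro ε i; cases h : s i <;> cases h2 : ε i <;> simp [sgn]
    calc ∑ ε : ι → Bool, ‖∑ i, (sgn (s i) * sgn (ε i)) • x i‖ ^ 2
        = ∑ ε : ι → Bool, ‖∑ i, sgn ((fun j => s j == ε j) i) • x i‖ ^ 2 := by
          refine Finset.sum_congr rfl fun ε _ => ?_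
          rw [show (∑ i, (sgn (s i) * sgn (ε i)) • x i) = ∑ i, sgn ((fun j => s j == ε j) i) • x i
            from Finset.sum_congr rfl fun i _ => by rw [hpt ε i]]
      _ = ∑ ε : ι → Bool, ‖∑ i, sgn (ε i) • x i‖ ^ 2 :=
          hinv.bijective.sum_comp (fun ε' => ‖∑ i, sgn (ε' i) • x i‖ ^ 2)
  calc ∑ ε : ι → Bool, ‖∑ i, (sgn (ε i) * a i) • x i‖ ^ 2
      = ∑ ε : ι → Bool, ‖∑ s : ι → Bool, wfn a s • ∑ i, (sgn (s i) * sgn (ε i)) • x i‖ ^ 2 :=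
        Finset.sum_congr rfl fun ε _ => by rw [← hkey ε]
    _ ≤ ∑ ε : ι → Bool, ∑ s : ι → Bool, wfn a s * ‖∑ i, (sgn (s i) * sgn (ε i)) • x i‖ ^ 2 :=
        Finset.sum_le_sum fun ε _ => jensen_sq (wfn a) _ (wfn_nonneg a ha) (sum_wfn a)
    _ = ∑ s : ι → Bool, wfn a s * ∑ ε : ι → Bool, ‖∑ i, (sgn (s i) * sgn (ε i)) • x i‖ ^ 2 := by
        rw [Finset.sum_comm]
        exact Finset.sum_congr rfl fun s _ => (Finset.mul_sum _ _ _).symm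
    _ = ∑ s : ι → Bool, wfn a s * ∑ ε : ι → Bool, ‖∑ i, sgn (ε i) • x i‖ ^ 2 :=
        Finset.sum_congr rfl fun s _ => by rw [hbij s]
    _ = ∑ ε : ι → Bool, ‖∑ i, sgn (ε i) • x i‖ ^ 2 := by
        rw [← Finset.sum_mul, sum_wfn a, one_mul]

private lemma contraction (x : ι → X) (a : ι → ℝ) (M : ℝ) (ha : ∀ i, |a i| ≤ M) :
    ∑ ε : ι → Bool, ‖∑ i, ((if ε i then (1 : ℝ) else -1) * a i) • x i‖ ^ 2 ≤
      M ^ 2 * ∑ ε : ι → Bool, ‖∑ i, (if ε i then (1 : ℝ) else -1) • x i‖ ^ 2 := by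
  rcases le_or_gt M 0 with hM | hM
  · have hz : ∀ i, a i = 0 := fun i => abs_eq_zero.1 (le_antisymm ((ha i).trans hM) (abs_nonneg _))
    have h0 : ∑ ε : ι → Bool, ‖∑ i, ((if ε i then (1 : ℝ) else -1) * a i) • x i‖ ^ 2 = 0 := by
      refine Finset.sum_eq_zero fun ε _ => ?_
      have h00 : ∑ i, ((if ε i then (1 : ℝ) else -1) * a i) • x i = 0 := by
        refine Finset.sum_eq_zero fun i _ => ?_
        rw [hz i, mul_zero, zero_smul]
      rw [h00, norm_zero]; ring
    rw [h0]
    positivity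
  · have ha' : ∀ i, |a i / M| ≤ 1 := by
      intro i
      rw [abs_div, abs_of_pos hM, div_le_one hM]
      exact ha i
    have hcu := contraction_unit x (fun i => a i / M) ha'
    have hstep : ∀ ε : ι → Bool, ∑ i, ((if ε i then (1 : ℝ) else -1) * a i) • x i =
        M • ∑ i, ((if ε i then (1 : ℝ) else -1) * (a i / M)) • x i := by
      intro ε
      rw [Finset.smul_sum]
      refine Finset.sum_congr rfl fun i _ => ?_
      rw [smul_smul, mul_comm M, mul_assoc, div_mul_cancel₀ _ (ne_of_gt hM)]
    calc ∑ ε : ι → Bool, ‖∑ i, ((if ε i then (1 : ℝ) else -1) * a i) • x i‖ ^ 2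
        = ∑ ε : ι → Bool, M ^ 2 * ‖∑ i, ((if ε i then (1 : ℝ) else -1) * (a i / M)) • x i‖ ^ 2 := by
          refine Finset.sum_congr rfl fun ε _ => ?_
          rw [hstep ε, norm_smul, Real.norm_eq_abs, abs_of_pos hM, mul_pow]
      _ = M ^ 2 * ∑ ε : ι → Bool, ‖∑ i, ((if ε i then (1 : ℝ) else -1) * (a i / M)) • x i‖ ^ 2 :=
          (Finset.mul_sum _ _ _).symm
      _ ≤ M ^ 2 * ∑ ε : ι → Bool, ‖∑ i, (if ε i then (1 : ℝ) else -1) • x i‖ ^ 2 :=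
          mul_le_mul_of_nonneg_left hcu (sq_nonneg M)

end ContractionAux

section MainAux

private lemma sqrt_div_le (A B M c : ℝ) (h : A ≤ M ^ 2 * B) (hM : 0 ≤ M) (hc : 0 < c) :
    Real.sqrt (A / c) ≤ M * Real.sqrt (B / c) := by
  have h1 : A / c ≤ M ^ 2 * B / c := by gcongr
  calc Real.sqrt (A / c) ≤ Real.sqrt (M ^ 2 * B / c) := Real.sqrt_le_sqrt h1
    _ = M * Real.sqrt (B / c) := by
        rw [mul_div_assoc, Real.sqrt_mul (sq_nonneg M), Real.sqrt_sq hM]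

private lemma len_pos (I : DyadicI) : 0 < len I := by
  unfold DyadicI.len
  positivity

private lemma haar_ne_zero_mem {I : DyadicI} {t : ℝ} (h : haar I t ≠ 0) : t ∈ toSet I := by
  have hl := len_pos I
  unfold DyadicI.haar at h
  simp only [DyadicI.toSet, Set.mem_Ico]
  split_ifs at h with h1 h2
  · rw [Set.mem_Ico] at h1
    exact ⟨h1.1, h1.2.trans_le (by linarith)⟩
  · rw [Set.mem_Ico] at h2
    exact ⟨le_trans (by linarith) h2.1, h2.2⟩
  · exact absurd rfl h

private lemma rearrCoef_apply {X : Type*} [NormedAddCommGroup X] [NormedSpace ℝ X]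
    (τ : DyadicI → DyadicI) (hτ : Function.Injective τ) (r : ℝ)
    (L : Finset DyadicI) (x : DyadicI → X) {I : DyadicI} (hI : I ∈ L) :
    rearrCoef τ r L x (τ I) = ((len I / len (τ I)) ^ (1 / r)) • x I := by
  unfold rearrCoef
  rw [Finset.sum_eq_single_of_mem I hI, if_pos rfl]
  intro b _ hne
  rw [if_neg fun h => hne (hτ h)]

end MainAux

/-- Let `0 < q ≤ p`, let `X` be a Banach space, `τ : D → D`
injective, `L ⊆ D` finite and `f = ∑_{J ∈ L} x_J h_J` with `x_J ∈ X`. Then for every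
`t ∈ [0,1]`,
`𝕊((T_{τ,q} ⊗ Id_X) f)(t) ≤ μ_{τ(L)}(t)^{1/q - 1/p} · 𝕊((T_{τ,p} ⊗ Id_X) f)(t)`. -/
theorem statement8 (p q : ℝ) (hq : 0 < q) (hqp : q ≤ p)
    (X : Type*) [NormedAddCommGroup X] [NormedSpace ℝ X] [CompleteSpace X]
    (τ : DyadicI → DyadicI) (hτ : Function.Injective τ)
    (L : Finset DyadicI) (x : DyadicI → X) (t : ℝ) (ht : t ∈ Set.Icc (0 : ℝ) 1) :
    sqFn (L.image τ) (rearrCoef τ q L x) t ≤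
      muFin τ L t ^ (1 / q - 1 / p) * sqFn (L.image τ) (rearrCoef τ p L x) t := by
  have hp : 0 < p := lt_of_lt_of_le hq hqp
  have he : 0 ≤ 1 / q - 1 / p := sub_nonneg.2 (one_div_le_one_div_of_le hq hqp)
  have hM : 0 ≤ muFin τ L t ^ (1 / q - 1 / p) :=
    Real.rpow_nonneg (NNReal.coe_nonneg _) _
  set s : Finset DyadicI := L.image τ with hs
  set σ' := Function.invFun τ with hσ'
  have hpre : ∀ J ∈ s, σ' J ∈ L ∧ τ (σ' J) = J := by
    intro J hJ
    rw [hs, Finset.mem_image] at hJ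
    obtain ⟨I, hI, hIJ⟩ := hJ
    have h2 : τ (σ' J) = J := Function.invFun_eq ⟨I, hIJ⟩
    have h3 : σ' J = I := hτ (by rw [h2, hIJ])
    exact ⟨h3 ▸ hI, h2⟩
  set a : {J // J ∈ s} → ℝ := fun J =>
    if haar J.1 t = 0 then 0 else (len (σ' J.1) / len J.1) ^ (1 / q - 1 / p) with ha
  set F : {J // J ∈ s} → X := fun J => haar J.1 t • rearrCoef τ p L x J.1 with hF
  have hbound : ∀ J : {J // J ∈ s}, |a J| ≤ muFin τ L t ^ (1 / q - 1 / p) := by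
    intro J
    obtain ⟨hIL, hτI⟩ := hpre J.1 J.2
    simp only [ha]
    by_cases hh : haar J.1 t = 0
    · rw [if_pos hh, abs_zero]
      exact hM
    · rw [if_neg hh]
      have hc : (0 : ℝ) < len (σ' J.1) / len J.1 := div_pos (len_pos _) (len_pos _)
      rw [abs_of_nonneg (Real.rpow_nonneg hc.le _)]
      refine Real.rpow_le_rpow hc.le ?_ he
      have htJ : t ∈ toSet J.1 := haar_ne_zero_mem hh
      have hind : Set.indicator (toSet (τ (σ' J.1))) (fun _ => (1 : ℝ)) t = 1 := by
        rw [hτI]; exact Set.indicator_of_mem htJ _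
      have hle := Finset.le_sup (f := fun I => Real.toNNReal
        (len I / len (τ I) * Set.indicator (toSet (τ I)) (fun _ => (1 : ℝ)) t)) hIL
      calc len (σ' J.1) / len J.1
          = ((Real.toNNReal (len (σ' J.1) / len (τ (σ' J.1)) *
              Set.indicator (toSet (τ (σ' J.1))) (fun _ => (1 : ℝ)) t) : ℝ≥0) : ℝ) := by
            rw [hind, mul_one, hτI, Real.coe_toNNReal _ hc.le]
        _ ≤ muFin τ L t := by
            unfold muFin
            exact NNReal.coe_le_coe.2 hle
  have hAq : ∀ ε : {J // J ∈ s} → Bool,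
      (∑ J : {J // J ∈ s}, ((if ε J then (1 : ℝ) else -1) * haar J.1 t) • rearrCoef τ q L x J.1)
        = ∑ J : {J // J ∈ s}, ((if ε J then (1 : ℝ) else -1) * a J) • F J := by
    intro ε
    refine Finset.sum_congr rfl fun J _ => ?_
    obtain ⟨hIL, hτI⟩ := hpre J.1 J.2
    simp only [ha, hF]
    by_cases hh : haar J.1 t = 0
    · simp [hh]
    · have hq' : rearrCoef τ q L x J.1 = ((len (σ' J.1) / len J.1) ^ (1 / q)) • x (σ' J.1) := by
        conv_lhs => rw [← hτI]
        rw [rearrCoef_apply τ hτ q L x hIL, hτI]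
      have hp' : rearrCoef τ p L x J.1 = ((len (σ' J.1) / len J.1) ^ (1 / p)) • x (σ' J.1) := by
        conv_lhs => rw [← hτI]
        rw [rearrCoef_apply τ hτ p L x hIL, hτI]
      rw [if_neg hh, hq', hp', smul_smul, smul_smul, smul_smul]
      congr 1
      have hc : (0 : ℝ) < len (σ' J.1) / len J.1 := div_pos (len_pos _) (len_pos _)
      rw [show (1 : ℝ) / q = (1 / q - 1 / p) + 1 / p from by ring, Real.rpow_add hc]
      ring
  have hAp : ∀ ε : {J // J ∈ s} → Bool,
      (∑ J : {J // J ∈ s}, ((if ε J then (1 : ℝ) else -1) * haar J.1 t) • rearrCoef τ p L x J.1)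
        = ∑ J : {J // J ∈ s}, (if ε J then (1 : ℝ) else -1) • F J := by
    intro ε
    refine Finset.sum_congr rfl fun J _ => ?_
    simp only [hF]
    rw [mul_smul]
  have key : (∑ ε : {J // J ∈ s} → Bool,
        ‖∑ J : {J // J ∈ s}, ((if ε J then (1 : ℝ) else -1) * haar J.1 t) •
          rearrCoef τ q L x J.1‖ ^ 2)
      ≤ (muFin τ L t ^ (1 / q - 1 / p)) ^ 2 * ∑ ε : {J // J ∈ s} → Bool,
        ‖∑ J : {J // J ∈ s}, ((if ε J then (1 : ℝ) else -1) * haar J.1 t) •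
          rearrCoef τ p L x J.1‖ ^ 2 := by
    calc (∑ ε : {J // J ∈ s} → Bool,
          ‖∑ J : {J // J ∈ s}, ((if ε J then (1 : ℝ) else -1) * haar J.1 t) •
            rearrCoef τ q L x J.1‖ ^ 2)
        = ∑ ε : {J // J ∈ s} → Bool,
            ‖∑ J : {J // J ∈ s}, ((if ε J then (1 : ℝ) else -1) * a J) • F J‖ ^ 2 :=
          Finset.sum_congr rfl fun ε _ => by rw [hAq ε]
      _ ≤ (muFin τ L t ^ (1 / q - 1 / p)) ^ 2 * ∑ ε : {J // J ∈ s} → Bool,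
            ‖∑ J : {J // J ∈ s}, (if ε J then (1 : ℝ) else -1) • F J‖ ^ 2 :=
          contraction F a _ hbound
      _ = _ := by
          congr 1
          exact (Finset.sum_congr rfl fun ε _ => by rw [hAp ε]).symm
  unfold sqFn
  simp only [← Finset.univ_eq_attach]
  exact sqrt_div_le _ _ _ _ key hM (by positivity)
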